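/- Let I and J be finite sets, (n_i)_{i∈I} and (m_j)_{j∈J} families of positive integers, and (a_i)_{i∈I}, (b_j)_{j∈J} families of positive real numbers. If (∏_{i∈I}(x^{n_i} - a_i))(∏_{j∈J}(x^{m_j} + b_j)) = (∏_{i∈I}(x^{n_i} + a_i))(∏_{j∈J}(x^{m_j} - b_j)) as polynomials over ℝ, then there exists a bijection σ: I → J with n_i = m_{σ(i)} and a_i = b_{σ(i)} for all i ∈ I. -/

import Mathlib

open Polynomial Multiset

noncomputable def fpoly (p : ℕ × ℝ) : ℝ[X] := X ^ p.1 - C p.2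
noncomputable def gpoly (p : ℕ × ℝ) : ℝ[X] := X ^ p.1 + C p.2
noncomputable def fC (p : ℕ × ℝ) : ℂ[X] := X ^ p.1 - C (p.2 : ℂ)
noncomputable def gC (p : ℕ × ℝ) : ℂ[X] := X ^ p.1 + C (p.2 : ℂ)

lemma gC_eq (p : ℕ × ℝ) : gC p = X ^ p.1 - C (-(p.2 : ℂ)) := by
  rw [gC, map_neg, sub_neg_eq_add]

lemma gpoly_eq (p : ℕ × ℝ) : gpoly p = X ^ p.1 - C (-p.2) := by
  rw [gpoly, map_neg, sub_neg_eq_add]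

lemma msprodpos {s : Multiset ℝ} (h : ∀ x ∈ s, 0 < x) : 0 < s.prod := by
  induction s using Multiset.induction with
  | empty => simp
  | cons a s ih =>
    rw [Multiset.prod_cons]
    exact mul_pos (h a (Multiset.mem_cons_self a s))
      (ih fun x hx => h x (Multiset.mem_cons_of_mem hx))

lemma sum_ite_count {α : Type*} [DecidableEq α] (P : Multiset α) (p0 : α) :
    (P.map (fun p => if p = p0 then 1 else 0)).sum = P.count p0 := by
  induction P using Multiset.induction with
  | empty => simp
  | cons a s ih =>
    rw [Multiset.map_cons, Multiset.sum_cons, ih, Multiset.count_cons]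
    by_cases h : a = p0
    · simp [h, Nat.add_comm]
    · simp [h]; exact fun hh => h hh.symm

lemma count_nthRoots' (n : ℕ) (hn : 0 < n) (c z : ℂ) (hc : c ≠ 0) :
    (Polynomial.nthRoots n c).count z = if z ^ n = c then 1 else 0 := by
  have hnodup : (Polynomial.nthRoots n c).Nodup :=
    (Complex.isPrimitiveRoot_exp n hn.ne').nthRoots_nodup hc
  by_cases h : z ^ n = c
  · rw [if_pos h]
    exact Multiset.count_eq_one_of_mem hnodup ((Polynomial.mem_nthRoots hn).2 h)
  · rw [if_neg h]
    exact Multiset.count_eq_zero_of_notMem (fun hm => h ((Polynomial.mem_nthRoots hn).1 hm))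

lemma zpow_cases (r : ℝ) (hr : 0 < r) (N : ℕ) (hN : 0 < N) (n : ℕ) (hn : 0 < n)
    (a : ℝ) (ha : 0 < a) (hclass : a = r ^ n → n ≤ N) :
    ¬ (((r : ℂ) * Complex.exp ((Real.pi / N : ℝ) * Complex.I)) ^ n = (a : ℂ)) ∧
    ((((r : ℂ) * Complex.exp ((Real.pi / N : ℝ) * Complex.I)) ^ n = -(a : ℂ)) ↔
      (n = N ∧ a = r ^ N)) := by
  set θ : ℝ := Real.pi / N with hθ
  set z : ℂ := (r : ℂ) * Complex.exp ((θ : ℝ) * Complex.I) with hz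
  have hzn : z ^ n = ((r ^ n : ℝ) : ℂ) * Complex.exp ((n * θ : ℝ) * Complex.I) := by
    rw [hz, mul_pow, ← Complex.exp_nat_mul]
    push_cast
    ring_nf
  have habs : ∀ ε : ℝ, z ^ n = (ε : ℂ) → r ^ n = |ε| := by
    intro ε hε
    have h' := congrArg (‖·‖) hε
    rw [hzn, norm_mul, Complex.norm_real, Real.norm_eq_abs, Complex.norm_exp_ofReal_mul_I, mul_one,
      Complex.norm_real, Real.norm_eq_abs, abs_of_pos (pow_pos hr n)] at h'
    exact h'
  have hexp : ∀ ε : ℂ, z ^ n = ((r ^ n : ℝ) : ℂ) * ε → Complex.exp ((n * θ : ℝ) * Complex.I) = ε := by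
    intro ε hε
    rw [hzn] at hε
    have hr0 : ((r ^ n : ℝ) : ℂ) ≠ 0 := by
      exact_mod_cast (pow_pos hr n).ne'
    exact mul_left_cancel₀ hr0 hε
  have key1 : ¬ z ^ n = (a : ℂ) := by
    intro hcon
    have hra : r ^ n = a := by simpa [abs_of_pos ha] using habs a hcon
    have hnN : n ≤ N := hclass hra.symm
    have h1 : Complex.exp ((n * θ : ℝ) * Complex.I) = 1 := by
      apply hexp 1
      rw [mul_one, hcon, hra]
    rw [Complex.exp_eq_one_iff] at h1
    obtain ⟨k, hk⟩ := h1
    have hk' : (n * θ : ℝ) = k * (2 * Real.pi) := by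
      have := congrArg Complex.im hk
      simpa [Complex.mul_im] using this
    have hNpos : (0:ℝ) < N := by exact_mod_cast hN
    have : (n : ℝ) = 2 * k * N := by
      rw [hθ] at hk'
      field_simp at hk'
      nlinarith [Real.pi_pos, hk']
    have hkn : (n : ℤ) = 2 * k * N := by exact_mod_cast this
    have : (0:ℤ) < n := by exact_mod_cast hn
    have hkpos : 0 < k := by nlinarith [this, hkn]
    have : (n:ℤ) ≤ N := by exact_mod_cast hnN
    nlinarith [hkn, hkpos, this, hN]
  refine ⟨key1, ⟨?_, ?_⟩⟩
  · intro hcon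
    have hra : r ^ n = a := by
      simpa [abs_of_pos ha, abs_neg] using habs (-a) (by rw [hcon]; push_cast; ring)
    have hnN : n ≤ N := hclass hra.symm
    have h1 : Complex.exp ((n * θ : ℝ) * Complex.I) = -1 := by
      apply hexp (-1)
      rw [hcon, hra]; ring
    have h2 : Complex.exp (((n * θ : ℝ) : ℂ) * Complex.I + (Real.pi : ℂ) * Complex.I) = 1 := by
      rw [Complex.exp_add, h1, Complex.exp_pi_mul_I]; ring
    rw [Complex.exp_eq_one_iff] at h2
    obtain ⟨k, hk⟩ := h2
    have hk' : (n * θ + Real.pi : ℝ) = k * (2 * Real.pi) := by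
      have := congrArg Complex.im hk
      simpa [Complex.mul_im, Complex.add_im] using this
    have hNpos : (0:ℝ) < N := by exact_mod_cast hN
    have hnn : (n : ℝ) = (2 * k - 1) * N := by
      rw [hθ] at hk'
      field_simp at hk'
      nlinarith [Real.pi_pos, hk']
    have hkn : (n : ℤ) = (2 * k - 1) * N := by exact_mod_cast hnn
    have hn' : (0:ℤ) < n := by exact_mod_cast hn
    have hnN' : (n:ℤ) ≤ N := by exact_mod_cast hnN
    have hNz : (0:ℤ) < N := by exact_mod_cast hN
    have hkeq : k = 1 := by nlinarith [hkn, hn', hnN', hNz]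
    subst hkeq
    have : (n:ℤ) = N := by linarith [hkn]
    have hnNeq : n = N := by exact_mod_cast this
    exact ⟨hnNeq, by rw [← hra, hnNeq]⟩
  · rintro ⟨rfl, rfl⟩
    rw [hzn]
    have : ((n : ℝ) * θ) = Real.pi := by
      rw [hθ]; field_simp
    rw [this, Complex.exp_pi_mul_I]
    push_cast; ring

lemma aux0 (Q : Multiset (ℕ × ℝ)) (hQ : ∀ q ∈ Q, 0 < q.1 ∧ 0 < q.2)
    (h : (Q.map gpoly).prod = (Q.map fpoly).prod) : Q = 0 := by
  by_contra hne
  obtain ⟨q, hq⟩ := Multiset.exists_mem_of_ne_zero hne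
  obtain ⟨hq1, hq2⟩ := hQ q hq
  set r : ℝ := q.2 ^ ((q.1 : ℝ)⁻¹) with hrdef
  have hr : 0 < r := Real.rpow_pos_of_pos hq2 _
  have hrn : r ^ q.1 = q.2 := Real.rpow_inv_natCast_pow hq2.le hq1.ne'
  have h1 : 0 < Polynomial.eval r (Q.map gpoly).prod := by
    rw [Polynomial.eval_multiset_prod]
    apply msprodpos
    intro x hx
    rw [Multiset.map_map, Multiset.mem_map] at hx
    obtain ⟨p, hp, rfl⟩ := hx
    have := (hQ p hp).2
    simp only [Function.comp_apply, gpoly, Polynomial.eval_add, Polynomial.eval_pow,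
      Polynomial.eval_X, Polynomial.eval_C]
    positivity
  have h2 : Polynomial.eval r (Q.map fpoly).prod = 0 := by
    rw [Polynomial.eval_multiset_prod]
    apply Multiset.prod_eq_zero
    rw [Multiset.map_map, Multiset.mem_map]
    refine ⟨q, hq, ?_⟩
    simp [fpoly, hrn]
  rw [h, h2] at h1
  exact lt_irrefl 0 h1

lemma key : ∀ (k : ℕ) (P Q : Multiset (ℕ × ℝ)), Multiset.card P ≤ k →
    (∀ p ∈ P, 0 < p.1 ∧ 0 < p.2) → (∀ q ∈ Q, 0 < q.1 ∧ 0 < q.2) →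
    (P.map fpoly).prod * (Q.map gpoly).prod = (P.map gpoly).prod * (Q.map fpoly).prod →
    P = Q := by
  intro k
  induction k with
  | zero =>
    intro P Q hcard hP hQ h
    have hP0 : P = 0 := Multiset.card_eq_zero.mp (Nat.le_antisymm hcard (Nat.zero_le _))
    subst hP0
    simp only [Multiset.map_zero, Multiset.prod_zero, one_mul] at h
    rw [aux0 Q hQ h]
  | succ k ih =>
    intro P Q hcard hP hQ h
    by_cases hP0 : P = 0
    · subst hP0
      simp only [Multiset.map_zero, Multiset.prod_zero, one_mul] at h
      rw [aux0 Q hQ h]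
    obtain ⟨p1, hp1⟩ := Multiset.exists_mem_of_ne_zero hP0
    obtain ⟨hp11, hp12⟩ := hP p1 hp1
    have hPQpos : ∀ p ∈ P + Q, 0 < p.1 ∧ 0 < p.2 := fun p hp =>
      (Multiset.mem_add.1 hp).elim (hP p) (hQ p)
    set r : ℝ := p1.2 ^ ((p1.1 : ℝ)⁻¹) with hrdef
    have hr : 0 < r := Real.rpow_pos_of_pos hp12 _
    have hrn : r ^ p1.1 = p1.2 := Real.rpow_inv_natCast_pow hp12.le hp11.ne'
    classical
    set S : Finset ℕ := ((P + Q).toFinset.filter (fun p => p.2 = r ^ p.1)).image Prod.fst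
      with hSdef
    have hp1S : p1.1 ∈ S := Finset.mem_image.2 ⟨p1, Finset.mem_filter.2
      ⟨Multiset.mem_toFinset.2 (Multiset.mem_add.2 (Or.inl hp1)), hrn.symm⟩, rfl⟩
    have hSne : S.Nonempty := ⟨p1.1, hp1S⟩
    set N : ℕ := S.max' hSne with hNdef
    have hclass : ∀ p ∈ P + Q, p.2 = r ^ p.1 → p.1 ≤ N := fun p hp hc =>
      S.le_max' _ (Finset.mem_image.2 ⟨p, Finset.mem_filter.2
        ⟨Multiset.mem_toFinset.2 hp, hc⟩, rfl⟩)
    have hNS : N ∈ S := S.max'_mem hSne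
    obtain ⟨pN, hpNf, hpN1⟩ := Finset.mem_image.1 hNS
    obtain ⟨hpNmem', hpN2⟩ := Finset.mem_filter.1 hpNf
    have hpNmem : pN ∈ P + Q := Multiset.mem_toFinset.1 hpNmem'
    have hp0mem : ((N, r ^ N) : ℕ × ℝ) ∈ P + Q := by
      have : pN = (N, r ^ N) := Prod.ext hpN1 (by rw [hpN2, hpN1])
      rwa [this] at hpNmem
    have hN0 : 0 < N := lt_of_lt_of_le hp11 (S.le_max' _ hp1S)
    set p0 : ℕ × ℝ := (N, r ^ N) with hp0def
    -- complex identity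
    have hC : ((P.map fC).prod * (Q.map gC).prod : ℂ[X]) = (P.map gC).prod * (Q.map fC).prod := by
      have hmc := congrArg (Polynomial.map (algebraMap ℝ ℂ)) h
      rw [show fC = fun p => X ^ p.1 - C (p.2 : ℂ) from rfl, show gC = fun p => X ^ p.1 + C (p.2 : ℂ) from rfl]
      simpa only [Polynomial.map_mul, Polynomial.map_multiset_prod, Multiset.map_map,
        Function.comp_def, fpoly, gpoly, fC, gC, Polynomial.map_sub, Polynomial.map_add,
        Polynomial.map_pow, Polynomial.map_X, Polynomial.map_C, Complex.coe_algebraMap]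
        using hmc
    -- monic / nonzero facts
    have hfCm : ∀ p ∈ P + Q, (fC p).Monic := fun p hp =>
      Polynomial.monic_X_pow_sub_C _ ((hPQpos p hp).1.ne'
)
    have hgCm : ∀ p ∈ P + Q, (gC p).Monic := fun p hp => by
      rw [gC_eq]; exact Polynomial.monic_X_pow_sub_C _ ((hPQpos p hp).1.ne')
    have h0fP : (0 : ℂ[X]) ∉ P.map fC := by
      intro h0
      obtain ⟨p, hp, hp0⟩ := Multiset.mem_map.1 h0
      exact (hfCm p (Multiset.mem_add.2 (Or.inl hp))).ne_zero hp0
    have h0gP : (0 : ℂ[X]) ∉ P.map gC := by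
      intro h0
      obtain ⟨p, hp, hp0⟩ := Multiset.mem_map.1 h0
      exact (hgCm p (Multiset.mem_add.2 (Or.inl hp))).ne_zero hp0
    have h0fQ : (0 : ℂ[X]) ∉ Q.map fC := by
      intro h0
      obtain ⟨p, hp, hp0⟩ := Multiset.mem_map.1 h0
      exact (hfCm p (Multiset.mem_add.2 (Or.inr hp))).ne_zero hp0
    have h0gQ : (0 : ℂ[X]) ∉ Q.map gC := by
      intro h0
      obtain ⟨p, hp, hp0⟩ := Multiset.mem_map.1 h0
      exact (hgCm p (Multiset.mem_add.2 (Or.inr hp))).ne_zero hp0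
    have hroots := congrArg Polynomial.roots hC
    rw [Polynomial.roots_mul (mul_ne_zero (Multiset.prod_ne_zero h0fP)
          (Multiset.prod_ne_zero h0gQ)),
        Polynomial.roots_mul (mul_ne_zero (Multiset.prod_ne_zero h0gP)
          (Multiset.prod_ne_zero h0fQ)),
        Polynomial.roots_multiset_prod _ h0fP, Polynomial.roots_multiset_prod _ h0gQ,
        Polynomial.roots_multiset_prod _ h0gP, Polynomial.roots_multiset_prod _ h0fQ] at hroots
    set z : ℂ := (r : ℂ) * Complex.exp ((Real.pi / N : ℝ) * Complex.I) with hzdef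
    have hcnt := congrArg (Multiset.count z) hroots
    rw [Multiset.count_add, Multiset.count_add, Multiset.count_bind, Multiset.count_bind,
      Multiset.count_bind, Multiset.count_bind, Multiset.map_map, Multiset.map_map,
      Multiset.map_map, Multiset.map_map] at hcnt
    -- rewrite summands
    have hcases : ∀ p ∈ P + Q,
        (Multiset.count z (fC p).roots = 0) ∧
        (Multiset.count z (gC p).roots = if p = p0 then 1 else 0) := by
      intro p hp
      obtain ⟨hp1', hp2'⟩ := hPQpos p hp
      obtain ⟨hno, hiff⟩ := zpow_cases r hr N hN0 p.1 hp1' p.2 hp2'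
        (fun hc => hclass p hp hc)
      constructor
      · have : (fC p).roots = Polynomial.nthRoots p.1 ((p.2 : ℝ) : ℂ) := rfl
        rw [this, count_nthRoots' p.1 hp1' _ z (by exact_mod_cast hp2'.ne')]
        rw [if_neg hno]
      · have : (gC p).roots = Polynomial.nthRoots p.1 (-((p.2 : ℝ) : ℂ)) := by
          rw [gC_eq]; rfl
        rw [this, count_nthRoots' p.1 hp1' _ z (by simpa using hp2'.ne')]
        congr 1
        rw [eq_iff_iff]
        rw [hiff, hp0def, Prod.ext_iff]
    have hmapP0 : (P.map fun p => Multiset.count z (fC p).roots) = P.map (fun _ => 0) :=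
      Multiset.map_congr rfl fun p hp => (hcases p (Multiset.mem_add.2 (Or.inl hp))).1
    have hmapQ0 : (Q.map fun p => Multiset.count z (fC p).roots) = Q.map (fun _ => 0) :=
      Multiset.map_congr rfl fun p hp => (hcases p (Multiset.mem_add.2 (Or.inr hp))).1
    have hmapP1 : (P.map fun p => Multiset.count z (gC p).roots)
        = P.map (fun p => if p = p0 then 1 else 0) :=
      Multiset.map_congr rfl fun p hp => (hcases p (Multiset.mem_add.2 (Or.inl hp))).2
    have hmapQ1 : (Q.map fun p => Multiset.count z (gC p).roots)
        = Q.map (fun p => if p = p0 then 1 else 0) :=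
      Multiset.map_congr rfl fun p hp => (hcases p (Multiset.mem_add.2 (Or.inr hp))).2
    simp only [Function.comp] at hcnt
    rw [hmapP0, hmapQ0, hmapP1, hmapQ1, sum_ite_count, sum_ite_count] at hcnt
    simp only [Multiset.map_const', Multiset.sum_replicate, smul_eq_mul, Nat.mul_zero,
      Nat.zero_add, Nat.add_zero] at hcnt
    -- hcnt : count p0 Q = count p0 P
    have hboth : p0 ∈ P ∧ p0 ∈ Q := by
      rcases Multiset.mem_add.1 hp0mem with hmem | hmem
      · exact ⟨hmem, Multiset.count_pos.1 (by rw [hcnt]; exact Multiset.count_pos.2 hmem)⟩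
      · exact ⟨Multiset.count_pos.1 (by rw [← hcnt]; exact Multiset.count_pos.2 hmem), hmem⟩
    obtain ⟨P', hP'⟩ := Multiset.exists_cons_of_mem hboth.1
    obtain ⟨Q', hQ'⟩ := Multiset.exists_cons_of_mem hboth.2
    have hfg0 : fpoly p0 * gpoly p0 ≠ 0 := by
      apply mul_ne_zero
      · exact (Polynomial.monic_X_pow_sub_C _ hN0.ne').ne_zero
      · rw [gpoly_eq]; exact (Polynomial.monic_X_pow_sub_C _ hN0.ne').ne_zero
    have hcancel : (P'.map fpoly).prod * (Q'.map gpoly).prod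
        = (P'.map gpoly).prod * (Q'.map fpoly).prod := by
      apply mul_left_cancel₀ hfg0
      rw [hP', hQ', Multiset.map_cons, Multiset.prod_cons, Multiset.map_cons,
        Multiset.prod_cons, Multiset.map_cons, Multiset.prod_cons, Multiset.map_cons,
        Multiset.prod_cons] at h
      linear_combination h
    have hcard' : Multiset.card P' ≤ k := by
      rw [hP', Multiset.card_cons] at hcard
      omega
    have hrec := ih P' Q' hcard'
      (fun p hp => hP p (by rw [hP']; exact Multiset.mem_cons_of_mem hp))
      (fun q hq => hQ q (by rw [hQ']; exact Multiset.mem_cons_of_mem hq)) hcancel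
    rw [hP', hQ', hrec]

lemma exists_equiv_of_map_eq {I J γ : Type*} [Fintype I] [Fintype J] [DecidableEq γ]
    (F : I → γ) (G : J → γ)
    (h : Finset.univ.val.map F = Finset.univ.val.map G) :
    ∃ e : I ≃ J, ∀ i, F i = G (e i) := by
  classical
  have hfib : ∀ c, Fintype.card {i // F i = c} = Fintype.card {j // G j = c} := by
    intro c
    have hc := congrArg (Multiset.count c) h
    rw [Multiset.count_map, Multiset.count_map] at hc
    rw [Fintype.card_subtype, Fintype.card_subtype, Finset.card_def, Finset.card_def,
      Finset.filter_val, Finset.filter_val]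
    have e1 : Multiset.filter (fun i => F i = c) Finset.univ.val
        = Multiset.filter (fun i => c = F i) Finset.univ.val :=
      Multiset.filter_congr (fun x _ => by constructor <;> exact Eq.symm)
    have e2 : Multiset.filter (fun j => G j = c) Finset.univ.val
        = Multiset.filter (fun j => c = G j) Finset.univ.val :=
      Multiset.filter_congr (fun x _ => by constructor <;> exact Eq.symm)
    rw [e1, e2, hc]
  refine ⟨Equiv.ofFiberEquiv (fun c => Fintype.equivOfCardEq (hfib c)), fun i => ?_⟩
  exact (Equiv.ofFiberEquiv_map (fun c => Fintype.equivOfCardEq (hfib c)) i).symm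

theorem stmt1 {I J : Type*} [Fintype I] [Fintype J]
    (n : I → ℕ) (m : J → ℕ) (a : I → ℝ) (b : J → ℝ)
    (hn : ∀ i, 0 < n i) (hm : ∀ j, 0 < m j)
    (ha : ∀ i, 0 < a i) (hb : ∀ j, 0 < b j)
    (h : ((∏ i, (X ^ n i - C (a i))) * (∏ j, (X ^ m j + C (b j))) : ℝ[X])
       = (∏ i, (X ^ n i + C (a i))) * (∏ j, (X ^ m j - C (b j)))) :
    ∃ σ : I ≃ J, ∀ i, n i = m (σ i) ∧ a i = b (σ i) := by
  classical
  set F : I → ℕ × ℝ := fun i => (n i, a i) with hF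
  set G : J → ℕ × ℝ := fun j => (m j, b j) with hG
  set P : Multiset (ℕ × ℝ) := Finset.univ.val.map F with hPdef
  set Q : Multiset (ℕ × ℝ) := Finset.univ.val.map G with hQdef
  have hPQ : P = Q := by
    apply key (Multiset.card P) P Q le_rfl
    · intro p hp
      obtain ⟨i, _, rfl⟩ := Multiset.mem_map.1 hp
      exact ⟨hn i, ha i⟩
    · intro q hq
      obtain ⟨j, _, rfl⟩ := Multiset.mem_map.1 hq
      exact ⟨hm j, hb j⟩
    · have e1 : (P.map fpoly).prod = ∏ i, (X ^ n i - C (a i)) := by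
        rw [hPdef, Multiset.map_map, Finset.prod_eq_multiset_prod]
        rfl
      have e2 : (Q.map gpoly).prod = ∏ j, (X ^ m j + C (b j)) := by
        rw [hQdef, Multiset.map_map, Finset.prod_eq_multiset_prod]
        rfl
      have e3 : (P.map gpoly).prod = ∏ i, (X ^ n i + C (a i)) := by
        rw [hPdef, Multiset.map_map, Finset.prod_eq_multiset_prod]
        rfl
      have e4 : (Q.map fpoly).prod = ∏ j, (X ^ m j - C (b j)) := by
        rw [hQdef, Multiset.map_map, Finset.prod_eq_multiset_prod]
        rfl
      rw [e1, e2, e3, e4]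
      exact h
  obtain ⟨e, he⟩ := exists_equiv_of_map_eq F G hPQ
  refine ⟨e, fun i => ?_⟩
  have := he i
  rw [hF, hG] at this
  exact ⟨congrArg Prod.fst this, congrArg Prod.snd this⟩
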